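/- arXiv:2211.07996 — 2 statements merged into one kernel-verified Lean document; each statement's English description precedes it below -/
import Mathlib

section
/- Fix integers r, s ≥ 1 and t ≥ 2, and let \widetilde{P}^t_{r,s} denote the number of t-cores λ ∈ Par_{r,s} with λ_1 = s and λ_r ≥ 1 (i.e., with largest part exactly s and exactly r nonzero parts). If r + s ≡ 1 (mod t), then \widetilde{P}^t_{r,s} = 0. Otherwise, letting j be the unique element of {1, ..., t−1} with j ≡ r + s − 1 (mod t), \widetilde{P}^t_{r,s} equals the coefficient of q^{r − n_j} in the polynomial ∏_{i=1, i≠j}^{t−1} (1 + q + q^2 + ... + q^{n_i}). -/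
open Finset

/-- Partitions in the `r × s` rectangle: weakly decreasing `r`-tuples with parts at most `s`. -/
def IsRectPartition (r s : ℕ) (lam : Fin r → ℕ) : Prop :=
  (∀ i j : Fin r, i ≤ j → lam j ≤ lam i) ∧ ∀ i, lam i ≤ s

/-- The beta-set `β(λ) = {λ_i + r − i : 1 ≤ i ≤ r}` (with 0-indexed `i`). -/
def betaSet (r : ℕ) (lam : Fin r → ℕ) : Finset ℕ :=
  Finset.image (fun i : Fin r => lam i + (r - 1 - (i : ℕ))) Finset.univ

/-- `λ` is a `t`-core: for every `b ∈ β(λ)` with `b ≥ t`, also `b − t ∈ β(λ)`. -/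
def IsTCore (r t : ℕ) (lam : Fin r → ℕ) : Prop :=
  ∀ b ∈ betaSet r lam, t ≤ b → b - t ∈ betaSet r lam

/-- `n_i = ⌊(r+s+t−1−i)/t⌋`. -/
def nres (r s t i : ℕ) : ℕ := (r + s + t - 1 - i) / t

/-- `a_i(λ) = #{b ∈ β(λ) : b ≡ i (mod t)}`. -/
def aCount (r t : ℕ) (lam : Fin r → ℕ) (i : ℕ) : ℕ :=
  ((betaSet r lam).filter fun b => b % t = i).card

/-- The justification `J(λ)`: in each residue class `i` mod `t`, the `a_i(λ)` smallest
nonnegative integers congruent to `i`. -/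
def justification (r t : ℕ) (lam : Fin r → ℕ) : Finset ℕ :=
  (Finset.range t).biUnion fun i =>
    (Finset.range (aCount r t lam i)).image fun m => i + m * t

/-- The size of the `t`-core of `λ`: `Σ_{b ∈ J(λ)} b − r(r−1)/2`. -/
def coreSize (r t : ℕ) (lam : Fin r → ℕ) : ℕ :=
  (∑ b ∈ justification r t lam, b) - r * (r - 1) / 2

lemma initialSeg (M : Finset ℕ) (h : ∀ m, m + 1 ∈ M → m ∈ M) : M = Finset.range M.card := by
  have hdown : ∀ m ∈ M, ∀ k, k ≤ m → k ∈ M := by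
    intro m hm k hk
    have key : ∀ d, m - d ∈ M := by
      intro d
      induction d with
      | zero => simpa
      | succ d ih =>
        rcases Nat.eq_zero_or_pos (m - d) with h0 | h0
        · have : m - (d+1) = m - d := by omega
          rw [this]; exact ih
        · have : (m - (d+1)) + 1 = m - d := by omega
          exact h _ (by rw [this]; exact ih)
    have : k = m - (m - k) := by omega
    rw [this]; exact key _
  rcases M.eq_empty_or_nonempty with rfl | hne
  · simp
  · have hM : M = Finset.range (M.max' hne + 1) := by
      apply Finset.Subset.antisymm
      · intro x hx
        exact Finset.mem_range.mpr (Nat.lt_succ_of_le (M.le_max' x hx))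
      · intro x hx
        exact hdown _ (M.max'_mem hne) x (Nat.lt_succ_iff.mp (Finset.mem_range.mp hx))
    rw [hM, Finset.card_range]


lemma T_prod_eq {α : Type*} (s : Finset α) (g : α → ℤ) :
    (∏ i ∈ s, (LaurentPolynomial.T (g i) : LaurentPolynomial ℤ)) = LaurentPolynomial.T (∑ i ∈ s, g i) := by
  induction s using Finset.cons_induction with
  | empty => simp
  | cons a s ha ih => rw [Finset.prod_cons, Finset.sum_cons, LaurentPolynomial.T_add, ih]

lemma prod_T_apply (S : Finset ℕ) (n : ℕ → ℕ) (k : ℤ) :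
    (∏ i ∈ S, ∑ m ∈ Finset.range (n i + 1), (LaurentPolynomial.T (m : ℤ) : LaurentPolynomial ℤ)).coeff k
      = (((S.pi fun i => Finset.range (n i + 1))).filter
          (fun f => (∑ x ∈ S.attach, ((f x.1 x.2 : ℕ) : ℤ)) = k)).card := by
  rw [Finset.prod_sum]
  rw [Finset.sum_congr rfl (fun p _ => T_prod_eq S.attach (fun x => ((p x.1 x.2 : ℕ) : ℤ)))]
  rw [AddMonoidAlgebra.coeff_sum, Finsupp.finset_sum_apply]
  simp only [LaurentPolynomial.T_apply]
  rw [Finset.sum_boole]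




section SM
variable {r : ℕ} {f : Fin r → ℕ}

lemma sm_gain (hf : StrictMono f) {a b : Fin r} (hab : a ≤ b) :
    f a + ((b : ℕ) - (a : ℕ)) ≤ f b := by
  obtain ⟨d, hd⟩ : ∃ d, (b : ℕ) = (a : ℕ) + d := ⟨(b : ℕ) - a, by omega⟩
  induction d generalizing b with
  | zero =>
    have : b = a := Fin.ext (by omega)
    subst this; simp
  | succ d ih =>
    have hb' : (a : ℕ) + d < r := by have := b.isLt; omega
    set b' : Fin r := ⟨(a : ℕ) + d, hb'⟩ with hb'def
    have h1 : f a + ((b' : ℕ) - (a : ℕ)) ≤ f b' :=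
      ih (Fin.le_def.mpr (by simp [b', Nat.le_add_right])) (by simp [b'])
    have h2 : f b' < f b := hf (Fin.lt_def.mpr (by simp [b']; omega))
    have hb'v : (b' : ℕ) = (a : ℕ) + d := rfl
    omega

lemma sm_le_apply (hf : StrictMono f) (hr : 1 ≤ r) (k : Fin r) : (k : ℕ) ≤ f k := by
  have h := sm_gain hf (a := ⟨0, by omega⟩) (b := k) (Fin.le_def.mpr (by simp))
  simp only [Fin.val_mk, Nat.sub_zero] at h
  omega

end SM

section Beta
variable {r s : ℕ} {lam : Fin r → ℕ}

lemma g_anti (hp : IsRectPartition r s lam) {i j : Fin r} (hij : i < j) :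
    lam j + (r - 1 - (j : ℕ)) < lam i + (r - 1 - (i : ℕ)) := by
  have h1 : lam j ≤ lam i := hp.1 i j (le_of_lt hij)
  have h2 := j.isLt
  have h3 : (i : ℕ) < (j : ℕ) := hij
  omega

lemma g_inj (hp : IsRectPartition r s lam) :
    Function.Injective (fun i : Fin r => lam i + (r - 1 - (i : ℕ))) := by
  intro i j hij
  by_contra hne
  rcases lt_or_gt_of_ne hne with h | h
  · exact absurd hij (Nat.ne_of_gt (g_anti hp h))
  · exact absurd hij (Nat.ne_of_lt (g_anti hp h))

lemma betaSet_card (hp : IsRectPartition r s lam) : (betaSet r lam).card = r := by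
  rw [betaSet, Finset.card_image_of_injective _ (g_inj hp), Finset.card_univ, Fintype.card_fin]

lemma betaSet_subset (hr : 1 ≤ r) (hp : IsRectPartition r s lam) :
    betaSet r lam ⊆ Finset.range (r + s) := by
  intro b hb
  rw [betaSet, Finset.mem_image] at hb
  obtain ⟨i, -, rfl⟩ := hb
  have h1 := hp.2 i
  have h2 := i.isLt
  rw [Finset.mem_range]
  omega

lemma betaSet_top (hr : 1 ≤ r) (hp : IsRectPartition r s lam) :
    lam ⟨0, hr⟩ = s ↔ r + s - 1 ∈ betaSet r lam := by
  constructor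
  · intro h
    rw [betaSet, Finset.mem_image]
    exact ⟨⟨0, by omega⟩, Finset.mem_univ _, by simp [h]; omega⟩
  · intro h
    rw [betaSet, Finset.mem_image] at h
    obtain ⟨i, -, hi⟩ := h
    have h1 := hp.2 i
    have h2 := i.isLt
    have h3 : (i : ℕ) = 0 := by omega
    have h4 : i = ⟨0, by omega⟩ := Fin.ext h3
    rw [← h4]
    omega

lemma betaSet_bot (hr : 1 ≤ r) (hp : IsRectPartition r s lam) :
    lam ⟨r - 1, Nat.sub_lt hr Nat.zero_lt_one⟩ = 0 ↔ 0 ∈ betaSet r lam := by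
  constructor
  · intro h
    rw [betaSet, Finset.mem_image]
    exact ⟨⟨r - 1, by omega⟩, Finset.mem_univ _, by simp [h]⟩
  · intro h
    rw [betaSet, Finset.mem_image] at h
    obtain ⟨i, -, hi⟩ := h
    have h2 := i.isLt
    have h3 : (i : ℕ) = r - 1 := by omega
    have h4 : i = ⟨r - 1, by omega⟩ := Fin.ext h3
    rw [← h4]
    omega

lemma beta_injective (hr : 1 ≤ r) {lam' : Fin r → ℕ} (hp : IsRectPartition r s lam)
    (hp' : IsRectPartition r s lam') (h : betaSet r lam = betaSet r lam') : lam = lam' := by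
  set G : Fin r → ℕ := fun k => lam k.rev + (r - 1 - (k.rev : ℕ)) with hG
  set G' : Fin r → ℕ := fun k => lam' k.rev + (r - 1 - (k.rev : ℕ)) with hG'
  have hsm : StrictMono G := by
    intro a b hab
    exact g_anti hp (Fin.rev_lt_rev.mpr hab)
  have hsm' : StrictMono G' := by
    intro a b hab
    exact g_anti hp' (Fin.rev_lt_rev.mpr hab)
  have hmem : ∀ x, G x ∈ betaSet r lam := fun x => Finset.mem_image_of_mem _ (Finset.mem_univ _)
  have hmem' : ∀ x, G' x ∈ betaSet r lam := by
    intro x; rw [h]; exact Finset.mem_image_of_mem _ (Finset.mem_univ _)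
  have e1 := Finset.orderEmbOfFin_unique (betaSet_card hp) hmem hsm
  have e2 := Finset.orderEmbOfFin_unique (betaSet_card hp) hmem' hsm'
  have hGG : G = G' := e1.trans e2.symm
  funext i
  have := congrFun hGG i.rev
  simp only [hG, hG', Fin.rev_rev] at this
  omega

end Beta

section Recon
variable {r s : ℕ}

lemma exists_lam (hr : 1 ≤ r) (B : Finset ℕ) (hBr : B.card = r)
    (hBs : B ⊆ Finset.range (r + s)) :
    ∃ lam : Fin r → ℕ, IsRectPartition r s lam ∧ betaSet r lam = B := by
  set f := B.orderEmbOfFin hBr with hf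
  have hsm : StrictMono f := (B.orderEmbOfFin hBr).strictMono
  have hge : ∀ k : Fin r, (k : ℕ) ≤ f k := sm_le_apply hsm hr
  have hub : ∀ k : Fin r, f k ≤ s + (k : ℕ) := by
    intro k
    have hlast : f ⟨r - 1, by omega⟩ < r + s := by
      have := hBs (Finset.orderEmbOfFin_mem B hBr ⟨r - 1, by omega⟩)
      rwa [Finset.mem_range] at this
    have hgain := sm_gain hsm (a := k) (b := ⟨r - 1, by omega⟩)
      (Fin.le_def.mpr (by simp; omega))
    simp only [Fin.val_mk] at hgain
    have hk := k.isLt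
    omega
  refine ⟨fun i => f i.rev - (r - 1 - (i : ℕ)), ⟨?_, ?_⟩, ?_⟩
  · intro i j hij
    show f j.rev - (r - 1 - (j : ℕ)) ≤ f i.rev - (r - 1 - (i : ℕ))
    have hrev : j.rev ≤ i.rev := Fin.rev_le_rev.mpr hij
    have hgain := sm_gain hsm hrev
    have hvi : (i.rev : ℕ) = r - 1 - (i : ℕ) := by
      rw [Fin.val_rev]; omega
    have hvj : (j.rev : ℕ) = r - 1 - (j : ℕ) := by
      rw [Fin.val_rev]; omega
    have h1 := hge j.rev
    have h2 := i.isLt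
    have h3 := j.isLt
    have hij' : (i : ℕ) ≤ (j : ℕ) := hij
    rw [hvi, hvj] at hgain
    rw [hvj] at h1
    omega
  · intro i
    show f i.rev - (r - 1 - (i : ℕ)) ≤ s
    have h1 := hub i.rev
    have hvi : (i.rev : ℕ) = r - 1 - (i : ℕ) := by rw [Fin.val_rev]; omega
    have h2 := i.isLt
    rw [hvi] at h1
    omega
  · have himg : betaSet r (fun i => f i.rev - (r - 1 - (i : ℕ))) =
        Finset.image (fun i : Fin r => f i.rev) Finset.univ := by
      rw [betaSet]
      apply Finset.image_congr
      intro i _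
      show (f i.rev - (r - 1 - (i : ℕ))) + (r - 1 - (i : ℕ)) = f i.rev
      have h1 := hge i.rev
      have hvi : (i.rev : ℕ) = r - 1 - (i : ℕ) := by rw [Fin.val_rev]; omega
      rw [hvi] at h1
      omega
    rw [himg]
    have hrev : Finset.image (fun i : Fin r => f i.rev) Finset.univ =
        Finset.image f Finset.univ := by
      apply Finset.Subset.antisymm
      · intro b hb
        rw [Finset.mem_image] at hb ⊢
        obtain ⟨i, -, rfl⟩ := hb
        exact ⟨i.rev, Finset.mem_univ _, rfl⟩
      · intro b hb
        rw [Finset.mem_image] at hb ⊢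
        obtain ⟨i, -, rfl⟩ := hb
        exact ⟨i.rev, Finset.mem_univ _, by rw [Fin.rev_rev]⟩
    rw [hrev]
    apply Finset.eq_of_subset_of_card_le
    · intro b hb
      rw [Finset.mem_image] at hb
      obtain ⟨i, -, rfl⟩ := hb
      exact Finset.orderEmbOfFin_mem B hBr i
    · rw [hBr, Finset.card_image_of_injective _ hsm.injective, Finset.card_univ,
        Fintype.card_fin]

end Recon


section Residue
variable {t : ℕ} {B : Finset ℕ}

/-- under t-closedness, each residue class is an initial segment -/
lemma filter_residue (ht : 0 < t) (hcl : ∀ b ∈ B, t ≤ b → b - t ∈ B) {i : ℕ} (hi : i < t) :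
    B.filter (fun b => b % t = i) =
      (Finset.range ((B.filter (fun b => b % t = i)).card)).image (fun m => i + m * t) := by
  set M : Finset ℕ := (B.filter (fun b => b % t = i)).image (fun b => b / t) with hM
  have hmem : ∀ b, b ∈ B.filter (fun b => b % t = i) ↔ ∃ m ∈ M, b = i + m * t := by
    intro b
    constructor
    · intro hb
      refine ⟨b / t, Finset.mem_image_of_mem _ hb, ?_⟩
      have h1 := Finset.mem_filter.mp hb
      have h2 := Nat.div_add_mod b t
      have h3 : t * (b / t) = (b / t) * t := Nat.mul_comm _ _
      omega
    · rintro ⟨m, hm, rfl⟩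
      rw [hM, Finset.mem_image] at hm
      obtain ⟨c, hc, hct⟩ := hm
      have h1 := Finset.mem_filter.mp hc
      have h2 := Nat.div_add_mod c t
      have h3 : t * (c / t) = (c / t) * t := Nat.mul_comm _ _
      have : c = i + (c / t) * t := by omega
      rw [hct] at this
      rw [← this]
      exact hc
  have hinj : Set.InjOn (fun b => b / t) (B.filter (fun b => b % t = i)) := by
    intro b hb c hc hbc
    have h1 := Finset.mem_filter.mp hb
    have h2 := Finset.mem_filter.mp hc
    have h3 := Nat.div_add_mod b t
    have h4 := Nat.div_add_mod c t
    simp only at hbc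
    have h5 : t * (b / t) = t * (c / t) := by rw [hbc]
    omega
  have hcard : M.card = (B.filter (fun b => b % t = i)).card :=
    Finset.card_image_of_injOn hinj
  have hdown : ∀ m, m + 1 ∈ M → m ∈ M := by
    intro m hm
    have hb : i + (m + 1) * t ∈ B.filter (fun b => b % t = i) := by
      rw [hmem]; exact ⟨m + 1, hm, rfl⟩
    have h1 := Finset.mem_filter.mp hb
    have h2 : t ≤ i + (m + 1) * t := by
      have : (m + 1) * t = m * t + t := Nat.succ_mul m t
      omega
    have h3 : (i + (m + 1) * t) - t ∈ B := hcl _ h1.1 h2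
    have h4 : (i + (m + 1) * t) - t = i + m * t := by
      have : (m + 1) * t = m * t + t := Nat.succ_mul m t
      omega
    rw [h4] at h3
    have h5 : i + m * t ∈ B.filter (fun b => b % t = i) := by
      rw [Finset.mem_filter]
      refine ⟨h3, ?_⟩
      rw [Nat.add_mul_mod_self_right]
      exact Nat.mod_eq_of_lt hi
    have := Finset.mem_image_of_mem (fun b => b / t) h5
    rw [← hM] at this
    have h6 : (i + m * t) / t = m := by
      rw [Nat.add_mul_div_right _ _ ht, Nat.div_eq_of_lt hi]
      omega
    have h7 : (i + m * t) / t ∈ M := this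
    rwa [h6] at h7
  have hMr : M = Finset.range M.card := initialSeg M hdown
  ext b
  rw [hmem, Finset.mem_image]
  constructor
  · rintro ⟨m, hm, rfl⟩
    rw [hMr, Finset.mem_range, hcard] at hm
    exact ⟨m, Finset.mem_range.mpr hm, rfl⟩
  · rintro ⟨m, hm, rfl⟩
    rw [Finset.mem_range, ← hcard] at hm
    exact ⟨m, by rw [hMr]; exact Finset.mem_range.mpr hm, rfl⟩

lemma mem_residue_iff (ht : 0 < t) (hcl : ∀ b ∈ B, t ≤ b → b - t ∈ B) {i : ℕ} (hi : i < t)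
    (b : ℕ) : (b ∈ B ∧ b % t = i) ↔
      ∃ m < (B.filter (fun b => b % t = i)).card, b = i + m * t := by
  have h := filter_residue ht hcl hi
  constructor
  · intro hb
    have : b ∈ B.filter (fun b => b % t = i) := Finset.mem_filter.mpr hb
    rw [h, Finset.mem_image] at this
    obtain ⟨m, hm, rfl⟩ := this
    exact ⟨m, Finset.mem_range.mp hm, rfl⟩
  · rintro ⟨m, hm, rfl⟩
    have : i + m * t ∈ B.filter (fun b => b % t = i) := by
      rw [h, Finset.mem_image]
      exact ⟨m, Finset.mem_range.mpr hm, rfl⟩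
    exact Finset.mem_filter.mp this

end Residue

section Counting
variable {r s t : ℕ} {B : Finset ℕ}

lemma aB_le (ht : 0 < t) (hcl : ∀ b ∈ B, t ≤ b → b - t ∈ B)
    (hB : B ⊆ Finset.range (r + s)) {i : ℕ} (hi : i < t) :
    (B.filter (fun b => b % t = i)).card ≤ nres r s t i := by
  set A := (B.filter (fun b => b % t = i)).card with hA
  rcases Nat.eq_zero_or_pos A with h0 | h0
  · omega
  obtain ⟨A', hA'⟩ : ∃ A', A = A' + 1 := ⟨A - 1, by omega⟩
  have hmem : i + A' * t ∈ B ∧ (i + A' * t) % t = i :=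
    (mem_residue_iff ht hcl hi _).mpr ⟨A', by omega, rfl⟩
  have h1 : i + A' * t < r + s := Finset.mem_range.mp (hB hmem.1)
  rw [nres, Nat.le_div_iff_mul_le ht]
  have e : (A' + 1) * t = A' * t + t := Nat.succ_mul _ _
  have e2 : A * t = (A' + 1) * t := by rw [hA']
  omega

lemma sum_aB (ht : 0 < t) :
    ∑ i ∈ Finset.range t, (B.filter (fun b => b % t = i)).card = B.card :=
  (Finset.card_eq_sum_card_fiberwise
    (fun b _ => Finset.mem_range.mpr (Nat.mod_lt b ht))).symm

lemma nres_top (hrs : 1 ≤ r + s) (ht : 0 < t) :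
    nres r s t ((r + s - 1) % t) = (r + s - 1) / t + 1 := by
  have hdm := Nat.div_add_mod (r + s - 1) t
  have hj : (r + s - 1) % t < t := Nat.mod_lt _ ht
  have e1 : r + s + t - 1 - ((r + s - 1) % t) = t * ((r + s - 1) / t) + t := by omega
  rw [nres, e1, ← Nat.mul_succ, Nat.mul_div_cancel_left _ ht]

lemma top_mem_iff (hrs : 1 ≤ r + s) (ht : 0 < t) (hcl : ∀ b ∈ B, t ≤ b → b - t ∈ B)
    (hB : B ⊆ Finset.range (r + s)) :
    r + s - 1 ∈ B ↔
      (B.filter (fun b => b % t = (r + s - 1) % t)).card = nres r s t ((r + s - 1) % t) := by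
  set j := (r + s - 1) % t with hjdef
  set q := (r + s - 1) / t with hqdef
  have hj : j < t := Nat.mod_lt _ ht
  have hdm : t * q + j = r + s - 1 := Nat.div_add_mod _ _
  have hnt : nres r s t j = q + 1 := nres_top hrs ht
  have hle := aB_le (r := r) (s := s) ht hcl hB hj
  constructor
  · intro hmem
    have h := (mem_residue_iff ht hcl hj (r + s - 1)).mp ⟨hmem, rfl⟩
    obtain ⟨m, hm, he⟩ := h
    have hmq : m = q := by
      have h1 : m * t = q * t := by
        have h2 : t * q = q * t := Nat.mul_comm _ _
        omega
      exact Nat.eq_of_mul_eq_mul_right ht h1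
    omega
  · intro hq
    have : r + s - 1 = j + q * t := by
      have h2 : t * q = q * t := Nat.mul_comm _ _
      omega
    have h := (mem_residue_iff ht hcl hj (r + s - 1)).mpr ⟨q, by omega, this⟩
    exact h.1

lemma bot_mem_iff (ht : 0 < t) (hcl : ∀ b ∈ B, t ≤ b → b - t ∈ B) :
    0 ∈ B ↔ 0 < (B.filter (fun b => b % t = 0)).card := by
  constructor
  · intro h
    obtain ⟨m, hm, -⟩ := (mem_residue_iff ht hcl ht 0).mp ⟨h, Nat.zero_mod t⟩
    omega
  · intro h
    have := (mem_residue_iff ht hcl ht 0).mpr ⟨0, h, by simp⟩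
    exact this.1

lemma B_eq_biUnion (ht : 0 < t) (hcl : ∀ b ∈ B, t ≤ b → b - t ∈ B) :
    B = (Finset.range t).biUnion (fun i =>
      (Finset.range ((B.filter (fun b => b % t = i)).card)).image (fun m => i + m * t)) := by
  ext b
  rw [Finset.mem_biUnion]
  constructor
  · intro hb
    obtain ⟨m, hm, he⟩ := (mem_residue_iff ht hcl (Nat.mod_lt b ht) b).mp ⟨hb, rfl⟩
    exact ⟨b % t, Finset.mem_range.mpr (Nat.mod_lt b ht),
      Finset.mem_image.mpr ⟨m, Finset.mem_range.mpr hm, he.symm⟩⟩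
  · rintro ⟨i, hi, hb⟩
    rw [Finset.mem_image] at hb
    obtain ⟨m, hm, rfl⟩ := hb
    exact ((mem_residue_iff ht hcl (Finset.mem_range.mp hi) _).mpr
      ⟨m, Finset.mem_range.mp hm, rfl⟩).1

end Counting

section Bof
variable {r s t : ℕ} (a : ℕ → ℕ)

def Bof (t : ℕ) (a : ℕ → ℕ) : Finset ℕ :=
  (Finset.range t).biUnion (fun i => (Finset.range (a i)).image (fun m => i + m * t))

lemma mem_Bof {b : ℕ} : b ∈ Bof t a ↔ ∃ i < t, ∃ m < a i, b = i + m * t := by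
  simp only [Bof, Finset.mem_biUnion, Finset.mem_image, Finset.mem_range]
  constructor
  · rintro ⟨i, hi, m, hm, rfl⟩
    exact ⟨i, hi, m, hm, rfl⟩
  · rintro ⟨i, hi, m, hm, rfl⟩
    exact ⟨i, hi, m, hm, rfl⟩

lemma Bof_closed (ht : 0 < t) : ∀ b ∈ Bof t a, t ≤ b → b - t ∈ Bof t a := by
  intro b hb htb
  rw [mem_Bof] at hb ⊢
  obtain ⟨i, hi, m, hm, rfl⟩ := hb
  obtain ⟨m', rfl⟩ : ∃ m', m = m' + 1 := by
    refine ⟨m - 1, ?_⟩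
    rcases Nat.eq_zero_or_pos m with rfl | h0
    · simp at htb; omega
    · omega
  have e : (m' + 1) * t = m' * t + t := Nat.succ_mul _ _
  exact ⟨i, hi, m', by omega, by omega⟩

lemma Bof_card (ht : 0 < t) : (Bof t a).card = ∑ i ∈ Finset.range t, a i := by
  rw [Bof, Finset.card_biUnion]
  · apply Finset.sum_congr rfl
    intro i _
    rw [Finset.card_image_of_injective, Finset.card_range]
    intro x y hxy
    simp only at hxy
    have hx : x * t = y * t := by omega
    exact Nat.eq_of_mul_eq_mul_right ht hx
  · intro i hi j hj hij
    rw [Function.onFun, Finset.disjoint_left]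
    intro b hb hb'
    rw [Finset.mem_image] at hb hb'
    obtain ⟨m, hm, rfl⟩ := hb
    obtain ⟨m', hm', he⟩ := hb'
    simp only [Finset.coe_range, Set.mem_Iio] at hi hj
    have h1 : (j + m' * t) % t = j % t := Nat.add_mul_mod_self_right _ _ _
    have h2 : (i + m * t) % t = i % t := Nat.add_mul_mod_self_right _ _ _
    rw [← he] at h2
    rw [Nat.mod_eq_of_lt hi] at h2
    rw [Nat.mod_eq_of_lt hj] at h1
    omega

lemma Bof_subset (ht : 0 < t) (ha : ∀ i < t, a i ≤ nres r s t i) (hrs : 1 ≤ r + s) :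
    Bof t a ⊆ Finset.range (r + s) := by
  intro b hb
  rw [mem_Bof] at hb
  obtain ⟨i, hi, m, hm, rfl⟩ := hb
  have h1 : a i ≤ nres r s t i := ha i hi
  have h2 : nres r s t i * t ≤ r + s + t - 1 - i := Nat.div_mul_le_self _ _
  have h3 : (m + 1) * t ≤ nres r s t i * t := Nat.mul_le_mul_right t (by omega)
  have e : (m + 1) * t = m * t + t := Nat.succ_mul _ _
  rw [Finset.mem_range]
  omega

lemma Bof_filter (ht : 0 < t) {i : ℕ} (hi : i < t) :
    ((Bof t a).filter (fun b => b % t = i)).card = a i := by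
  have he : (Bof t a).filter (fun b => b % t = i) =
      (Finset.range (a i)).image (fun m => i + m * t) := by
    ext b
    rw [Finset.mem_filter, mem_Bof, Finset.mem_image]
    constructor
    · rintro ⟨⟨i', hi', m, hm, rfl⟩, hmod⟩
      have : (i' + m * t) % t = i' % t := Nat.add_mul_mod_self_right _ _ _
      rw [Nat.mod_eq_of_lt hi'] at this
      have : i' = i := by omega
      subst this
      exact ⟨m, Finset.mem_range.mpr hm, rfl⟩
    · rintro ⟨m, hm, rfl⟩
      rw [Finset.mem_range] at hm
      refine ⟨⟨i, hi, m, hm, rfl⟩, ?_⟩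
      rw [Nat.add_mul_mod_self_right, Nat.mod_eq_of_lt hi]
  rw [he, Finset.card_image_of_injective, Finset.card_range]
  intro x y hxy
  simp only at hxy
  have hx : x * t = y * t := by omega
  exact Nat.eq_of_mul_eq_mul_right ht hx

end Bof



lemma mem_conds {r s t : ℕ} (hr : 1 ≤ r) (hs : 1 ≤ s) (ht : 2 ≤ t) {lam : Fin r → ℕ}
    (h1 : IsRectPartition r s lam) (h2 : IsTCore r t lam)
    (h3 : lam ⟨0, hr⟩ = s) (h4 : 1 ≤ lam ⟨r - 1, Nat.sub_lt hr Nat.zero_lt_one⟩) :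
    aCount r t lam 0 = 0 ∧
    aCount r t lam ((r + s - 1) % t) = nres r s t ((r + s - 1) % t) ∧
    (∀ i, i < t → aCount r t lam i ≤ nres r s t i) ∧
    ∑ i ∈ Finset.range t, aCount r t lam i = r := by
  have ht0 : 0 < t := by omega
  have hcl : ∀ b ∈ betaSet r lam, t ≤ b → b - t ∈ betaSet r lam := h2
  have hB : betaSet r lam ⊆ Finset.range (r + s) := betaSet_subset hr h1
  refine ⟨?_, ?_, ?_, ?_⟩
  · have h0 : 0 ∉ betaSet r lam := by
      intro h0
      have := (betaSet_bot hr h1).mpr h0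
      omega
    rw [aCount]
    by_contra hne0
    exact h0 ((bot_mem_iff ht0 hcl).mpr (by omega))
  · exact (top_mem_iff (by omega) ht0 hcl hB).mp ((betaSet_top hr h1).mp h3)
  · intro i hi
    exact aB_le ht0 hcl hB hi
  · rw [show (fun i => aCount r t lam i) = fun i => ((betaSet r lam).filter
      (fun b => b % t = i)).card from rfl]
    rw [sum_aB ht0, betaSet_card h1]

/-- Counting `t`-cores in `Par_{r,s}` with largest part exactly `s` and exactly
`r` nonzero parts: if `r + s ≡ 1 (mod t)` the count is `0`; otherwise, with `j ∈ {1,…,t−1}`,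
`j ≡ r+s−1 (mod t)`, the count equals the coefficient of `q^{r−n_j}` (a possibly negative
exponent, whence the use of Laurent polynomials) in
`∏_{i=1, i≠j}^{t−1} (1 + q + ⋯ + q^{n_i})`. -/
theorem ncard_tcores_full_rect (r s t : ℕ) (hr : 1 ≤ r) (hs : 1 ≤ s) (ht : 2 ≤ t) :
    ((r + s) % t = 1 →
      {lam : Fin r → ℕ | IsRectPartition r s lam ∧ IsTCore r t lam ∧
        lam ⟨0, by omega⟩ = s ∧ 1 ≤ lam ⟨r - 1, by omega⟩}.ncard = 0) ∧
    ((r + s) % t ≠ 1 →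
      ({lam : Fin r → ℕ | IsRectPartition r s lam ∧ IsTCore r t lam ∧
          lam ⟨0, by omega⟩ = s ∧ 1 ≤ lam ⟨r - 1, by omega⟩}.ncard : ℤ) =
        (∏ i ∈ (Finset.Icc 1 (t - 1)).erase ((r + s - 1) % t),
            ∑ m ∈ Finset.range (nres r s t i + 1), LaurentPolynomial.T (m : ℤ) :
          LaurentPolynomial ℤ).coeff
          ((r : ℤ) - (nres r s t ((r + s - 1) % t) : ℤ))) := by
  have ht0 : 0 < t := by omega
  have hrs : 1 ≤ r + s := by omega
  constructor
  · -- case (r+s) % t = 1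
    intro hmod
    have hdm := Nat.div_add_mod (r + s) t
    have hj0 : (r + s - 1) % t = 0 := by
      have e : r + s - 1 = t * ((r + s) / t) := by omega
      rw [e, Nat.mul_mod_right]
    have hempty : {lam : Fin r → ℕ | IsRectPartition r s lam ∧ IsTCore r t lam ∧
        lam ⟨0, by omega⟩ = s ∧ 1 ≤ lam ⟨r - 1, by omega⟩} = ∅ := by
      rw [Set.eq_empty_iff_forall_notMem]
      rintro lam ⟨h1, h2, h3, h4⟩
      obtain ⟨c0, cj, -, -⟩ := mem_conds hr hs ht h1 h2 h3 h4
      rw [hj0] at cj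
      have hn0 : 1 ≤ nres r s t 0 := by
        rw [nres, Nat.le_div_iff_mul_le ht0]
        omega
      omega
    rw [hempty, Set.ncard_empty]
  · -- main case
    intro hne
    set j := (r + s - 1) % t with hjdef
    have hj : j < t := Nat.mod_lt _ ht0
    have hdm : t * ((r + s - 1) / t) + j = r + s - 1 := Nat.div_add_mod _ _
    have hj1 : 1 ≤ j := by
      by_contra hc
      apply hne
      have hj0 : j = 0 := by omega
      have e : r + s = t * ((r + s - 1) / t) + 1 := by omega
      rw [e, Nat.mul_add_mod, Nat.mod_eq_of_lt (by omega)]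
    have hjmem : j ∈ Finset.Icc 1 (t - 1) := Finset.mem_Icc.mpr ⟨hj1, by omega⟩
    set S := (Finset.Icc 1 (t - 1)).erase j with hSdef
    have hjS : j ∉ S := Finset.notMem_erase _ _
    have hSmem : ∀ i ∈ S, 1 ≤ i ∧ i ≤ t - 1 ∧ i ≠ j := by
      intro i hi
      rw [hSdef, Finset.mem_erase, Finset.mem_Icc] at hi
      exact ⟨hi.2.1, hi.2.2, hi.1⟩
    have h0S : (0 : ℕ) ∉ insert j S := by
      rw [Finset.mem_insert]
      rintro (h | h)
      · omega
      · have := hSmem 0 h; omega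
    have hsplit : Finset.range t = insert 0 (insert j S) := by
      rw [hSdef, Finset.insert_erase hjmem]
      ext x
      simp only [Finset.mem_range, Finset.mem_insert, Finset.mem_Icc]
      omega
    have hSlt : ∀ i ∈ S, i < t := by intro i hi; have := hSmem i hi; omega
    -- the target finset
    set k : ℤ := (r : ℤ) - (nres r s t j : ℤ) with hkdef
    set Fs := ((S.pi fun i => Finset.range (nres r s t i + 1))).filter
        (fun f => (∑ x ∈ S.attach, ((f x.1 x.2 : ℕ) : ℤ)) = k) with hFdef
    set P := {lam : Fin r → ℕ | IsRectPartition r s lam ∧ IsTCore r t lam ∧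
        lam ⟨0, by omega⟩ = s ∧ 1 ≤ lam ⟨r - 1, by omega⟩} with hPdef
    set Φ : (Fin r → ℕ) → (∀ a ∈ S, ℕ) := fun lam => fun i _ => aCount r t lam i with hΦdef
    have hbij : Set.BijOn Φ P ↑Fs := by
      refine ⟨?_, ?_, ?_⟩
      · -- MapsTo
        rintro lam ⟨h1, h2, h3, h4⟩
        obtain ⟨c0, cj, cle, csum⟩ := mem_conds hr hs ht h1 h2 h3 h4
        rw [← hjdef] at cj
        rw [Finset.mem_coe, hFdef, Finset.mem_filter]
        constructor
        · rw [Finset.mem_pi]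
          intro i hi
          show aCount r t lam i ∈ Finset.range (nres r s t i + 1)
          rw [Finset.mem_range]
          have := cle i (hSlt i hi)
          omega
        · have hattach : ∑ x ∈ S.attach, ((Φ lam x.1 x.2 : ℕ) : ℤ)
              = ∑ i ∈ S, ((aCount r t lam i : ℕ) : ℤ) := by
            rw [← Finset.sum_attach S (fun i => ((aCount r t lam i : ℕ) : ℤ))]
          rw [hattach]
          have hsum_split : ∑ i ∈ Finset.range t, aCount r t lam i =
              aCount r t lam 0 + (aCount r t lam j + ∑ i ∈ S, aCount r t lam i) := by
            rw [hsplit, Finset.sum_insert h0S, Finset.sum_insert hjS]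
          have hsum : ∑ i ∈ S, aCount r t lam i + nres r s t j = r := by omega
          have : ((∑ i ∈ S, aCount r t lam i : ℕ) : ℤ) = k := by
            rw [hkdef]
            omega
          rw [← this]
          push_cast
          rfl
      · -- InjOn
        rintro lam ⟨h1, h2, h3, h4⟩ lam' ⟨h1', h2', h3', h4'⟩ heq
        obtain ⟨c0, cj, cle, csum⟩ := mem_conds hr hs ht h1 h2 h3 h4
        obtain ⟨c0', cj', cle', csum'⟩ := mem_conds hr hs ht h1' h2' h3' h4'
        have hA : ∀ i ∈ S, aCount r t lam i = aCount r t lam' i := by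
          intro i hi
          exact congrFun (congrFun heq i) hi
        have hAll : ∀ i ∈ Finset.range t, aCount r t lam i = aCount r t lam' i := by
          intro i hi
          rw [Finset.mem_range] at hi
          rcases Nat.eq_zero_or_pos i with rfl | hipos
          · rw [c0, c0']
          rcases eq_or_ne i j with rfl | hij
          · rw [cj, cj']
          exact hA i (by rw [hSdef, Finset.mem_erase, Finset.mem_Icc]; exact ⟨hij, by omega, by omega⟩)
        have hbeta : betaSet r lam = betaSet r lam' := by
          rw [B_eq_biUnion ht0 h2, B_eq_biUnion ht0 h2']
          apply Finset.biUnion_congr rfl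
          intro i hi
          have := hAll i hi
          rw [aCount, aCount] at this
          rw [this]
        exact beta_injective hr h1 h1' hbeta
      · -- SurjOn
        intro f hf
        rw [Finset.mem_coe, hFdef, Finset.mem_filter] at hf
        obtain ⟨hpi, hsumf⟩ := hf
        rw [Finset.mem_pi] at hpi
        have hcast : ((∑ x ∈ S.attach, f x.1 x.2 : ℕ) : ℤ)
            = ∑ x ∈ S.attach, ((f x.1 x.2 : ℕ) : ℤ) := by push_cast; rfl
        have hσ : ((∑ x ∈ S.attach, f x.1 x.2 : ℕ) : ℤ) = (r : ℤ) - (nres r s t j : ℤ) := by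
          rw [hcast, hsumf, hkdef]
        have hnjr : nres r s t j ≤ r := by omega
        have hσr : (∑ x ∈ S.attach, f x.1 x.2) + nres r s t j = r := by omega
        set a : ℕ → ℕ := fun i => if i = 0 then 0 else if i = j then nres r s t j
          else if h : i ∈ S then f i h else 0 with hadef
        have ha0 : a 0 = 0 := by
          show (if (0:ℕ) = 0 then 0 else if (0:ℕ) = j then nres r s t j
            else if h : (0:ℕ) ∈ S then f 0 h else 0) = 0
          rw [if_pos rfl]
        have haj : a j = nres r s t j := by
          show (if j = 0 then 0 else if j = j then nres r s t j
            else if h : j ∈ S then f j h else 0) = nres r s t j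
          rw [if_neg (show ¬ j = 0 by omega), if_pos rfl]
        have haS : ∀ i (hi : i ∈ S), a i = f i hi := by
          intro i hi
          have hi' := hSmem i hi
          show (if i = 0 then 0 else if i = j then nres r s t j
            else if h : i ∈ S then f i h else 0) = f i hi
          rw [if_neg (show ¬ i = 0 by omega), if_neg hi'.2.2, dif_pos hi]
        have ha_le : ∀ i < t, a i ≤ nres r s t i := by
          intro i hi
          rcases Nat.eq_zero_or_pos i with rfl | hipos
          · rw [ha0]; exact Nat.zero_le _
          rcases eq_or_ne i j with rfl | hij
          · rw [haj]
          by_cases hiS : i ∈ S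
          · rw [haS i hiS]
            have := Finset.mem_range.mp (hpi i hiS)
            omega
          · show (if i = 0 then 0 else if i = j then nres r s t j
              else if h : i ∈ S then f i h else 0) ≤ nres r s t i
            rw [if_neg (show ¬ i = 0 by omega), if_neg hij, dif_neg hiS]
            exact Nat.zero_le _
        have hsum_a : ∑ i ∈ Finset.range t, a i = r := by
          rw [hsplit, Finset.sum_insert h0S, Finset.sum_insert hjS, ha0, haj]
          have : ∑ i ∈ S, a i = ∑ x ∈ S.attach, f x.1 x.2 := by
            rw [← Finset.sum_attach S a]
            apply Finset.sum_congr rfl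
            intro x _
            exact haS x.1 x.2
          omega
        have hBsub : Bof t a ⊆ Finset.range (r + s) := Bof_subset a ht0 ha_le hrs
        have hBcard : (Bof t a).card = r := by rw [Bof_card a ht0, hsum_a]
        have hBcl := Bof_closed a ht0
        obtain ⟨lam, hp, hbeta⟩ := exists_lam hr (Bof t a) hBcard hBsub
        have hcore : IsTCore r t lam := by
          intro b hb htb
          rw [hbeta] at hb ⊢
          exact hBcl b hb htb
        have hfilt : ∀ i, i < t → aCount r t lam i = a i := by
          intro i hi
          rw [aCount, hbeta, Bof_filter a ht0 hi]
        have htop : lam ⟨0, by omega⟩ = s := by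
          rw [betaSet_top hr hp, hbeta]
          rw [top_mem_iff hrs ht0 hBcl hBsub]
          rw [← hjdef]
          have := Bof_filter a ht0 hj
          rw [this, haj]
        have hbot : 1 ≤ lam ⟨r - 1, by omega⟩ := by
          by_contra hc
          have h0 : lam ⟨r - 1, by omega⟩ = 0 := by omega
          have h0B := (betaSet_bot hr hp).mp h0
          rw [hbeta] at h0B
          have := (bot_mem_iff ht0 hBcl).mp h0B
          rw [Bof_filter a ht0 ht0, ha0] at this
          omega
        refine ⟨lam, ⟨hp, hcore, htop, hbot⟩, ?_⟩
        rw [hΦdef]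
        funext i hi
        show aCount r t lam i = f i hi
        rw [hfilt i (hSlt i hi), haS i hi]
    have hcard : {lam : Fin r → ℕ | IsRectPartition r s lam ∧ IsTCore r t lam ∧
        lam ⟨0, by omega⟩ = s ∧ 1 ≤ lam ⟨r - 1, by omega⟩}.ncard = Fs.card := by
      rw [← hPdef]
      rw [← Set.ncard_coe_finset, ← hbij.image_eq, Set.ncard_image_of_injOn hbij.injOn]
    rw [hcard]
    rw [prod_T_apply S (nres r s t) k]
end

section
/- Fix integers r ≥ 1 and t ≥ 2. If s ≥ rt, then the number of t-cores in Par_{r,s} equals the binomial coefficient C(r+t−1, r). -/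
open Finset

section Aux

lemma card_finsetSum {ι α : Type*} (s : Finset ι) (f : ι → Multiset α) :
    Multiset.card (∑ i ∈ s, f i) = ∑ i ∈ s, Multiset.card (f i) := by
  classical
  induction s using Finset.induction with
  | empty => simp
  | insert _ _ h ih => simp [Finset.sum_insert h, ih]

noncomputable def symEq (t r : ℕ) : {a : Fin t → ℕ // ∑ i, a i = r} ≃ Sym (Fin t) r where
  toFun a := ⟨∑ i, (a.1 i) • ({i} : Multiset (Fin t)), by
    simp [card_finsetSum, a.2]⟩
  invFun m := ⟨fun i => m.1.count i, by
    rw [Multiset.sum_count_eq_card (fun a _ => mem_univ a)]; exact m.2⟩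
  left_inv a := by
    ext j
    simp [Multiset.count_sum', Multiset.count_singleton]
  right_inv m := by
    refine Subtype.ext ?_
    show ∑ i, (Multiset.count i m.1) • ({i} : Multiset (Fin t)) = m.1
    have h1 : ∑ i, (Multiset.count i m.1) • ({i} : Multiset (Fin t))
        = ∑ i ∈ m.1.toFinset, (Multiset.count i m.1) • ({i} : Multiset (Fin t)) := by
      refine (Finset.sum_subset (subset_univ _) ?_).symm
      intro x _ hx
      have : Multiset.count x m.1 = 0 := Multiset.count_eq_zero_of_notMem (by simpa using hx)
      rw [this, zero_smul]
    rw [h1, Multiset.toFinset_sum_count_nsmul_eq]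

lemma cardA (t r : ℕ) : Nat.card {a : Fin t → ℕ // ∑ i, a i = r} = (t + r - 1).choose r := by
  rw [Nat.card_congr (symEq t r), Nat.card_eq_fintype_card, Sym.card_sym_eq_choose]
  simp


lemma strictMono_gap {r : ℕ} {g : Fin r → ℕ} (hg : StrictMono g) :
    ∀ (d : ℕ) (k l : Fin r), (l : ℕ) = (k : ℕ) + d → g k + d ≤ g l := by
  intro d
  induction d with
  | zero =>
    intro k l h
    have : l = k := Fin.ext (by omega)
    simp [this]
  | succ d ih =>
    intro k l h
    have hkd : (k : ℕ) + d < r := by omega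
    have h1 := ih k ⟨(k : ℕ) + d, hkd⟩ rfl
    have h2 : g ⟨(k : ℕ) + d, hkd⟩ < g l := hg (by simp [Fin.lt_def]; omega)
    omega

lemma strictMono_ge {r : ℕ} (hr : 0 < r) {g : Fin r → ℕ} (hg : StrictMono g) (k : Fin r) :
    (k : ℕ) ≤ g k := by
  have := strictMono_gap hg (k : ℕ) ⟨0, hr⟩ k (by simp)
  omega

lemma mod_div_helper {i t : ℕ} (m : ℕ) (hi : i < t) :
    (i + m * t) % t = i ∧ (i + m * t) / t = m := by
  have ht : 0 < t := by omega
  constructor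
  · rw [Nat.add_mul_mod_self_right, Nat.mod_eq_of_lt hi]
  · rw [Nat.add_mul_div_right _ _ ht, Nat.div_eq_of_lt hi, Nat.zero_add]

lemma predclosed_eq_range {E : Finset ℕ} (h : ∀ e ∈ E, e ≠ 0 → e - 1 ∈ E) :
    E = Finset.range E.card := by
  have hdown : ∀ d : ℕ, ∀ e ∈ E, e - d ∈ E := by
    intro d
    induction d with
    | zero => simpa using fun e he => he
    | succ d ih =>
      intro e he
      rcases Nat.eq_zero_or_pos (e - d) with h0 | h0
      · have hz : e - (d + 1) = 0 := by omega
        rw [hz, ← h0]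
        exact ih e he
      · have := h (e - d) (ih e he) (by omega)
        have heq : e - (d + 1) = e - d - 1 := by omega
        rw [heq]; exact this
  have hsub : E ⊆ Finset.range E.card := by
    intro e he
    by_contra hni
    rw [Finset.mem_range, not_lt] at hni
    have hr : Finset.range (e + 1) ⊆ E := by
      intro k hk
      rw [Finset.mem_range] at hk
      have heq : e - (e - k) = k := by omega
      rw [← heq]
      exact hdown (e - k) e he
    have := Finset.card_le_card hr
    simp at this
    omega
  exact Finset.eq_of_subset_of_card_le hsub (by simp)

lemma biUnion_filter_mod {t : ℕ} (ht : 0 < t) (B : Finset ℕ) :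
    B = (Finset.range t).biUnion (fun i => B.filter fun b => b % t = i) := by
  ext b
  simp only [Finset.mem_biUnion, Finset.mem_range, Finset.mem_filter]
  constructor
  · intro hb
    exact ⟨b % t, Nat.mod_lt _ ht, hb, rfl⟩
  · rintro ⟨i, _, hb, _⟩
    exact hb

lemma tclosed_filter_eq {t : ℕ} (ht : 0 < t) {B : Finset ℕ}
    (hB : ∀ b ∈ B, t ≤ b → b - t ∈ B) (i : ℕ) (hi : i < t) :
    B.filter (fun b => b % t = i)
      = (Finset.range ((B.filter (fun b => b % t = i)).card)).image (fun m => i + m * t) := by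
  set D := B.filter (fun b => b % t = i) with hD
  have hmem : ∀ b ∈ D, b = i + (b / t) * t := by
    intro b hb
    rw [hD, Finset.mem_filter] at hb
    have h1 : b % t + t * (b / t) = b := Nat.mod_add_div b t
    have h2 : t * (b / t) = (b / t) * t := Nat.mul_comm _ _
    omega
  set E := D.image (fun b => b / t) with hE
  have hinj : Set.InjOn (fun b => b / t) D := by
    intro x hx y hy hxy
    have hx1 := hmem x hx
    have hy1 := hmem y hy
    simp only at hxy
    have : (x / t) * t = (y / t) * t := by rw [hxy]
    omega
  have hcard : E.card = D.card := Finset.card_image_of_injOn hinj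
  have hEpred : ∀ e ∈ E, e ≠ 0 → e - 1 ∈ E := by
    intro e he hne
    rw [hE, Finset.mem_image] at he
    obtain ⟨b, hb, rfl⟩ := he
    have hb1 := hmem b hb
    have hbB : b ∈ B := (Finset.mem_filter.mp hb).1
    have hq1 : 1 ≤ b / t := Nat.one_le_iff_ne_zero.mpr hne
    have hsm : (b / t) * t = (b / t - 1) * t + t := by
      have := Nat.sub_mul (b / t) 1 t
      have h2 : t ≤ (b / t) * t := by
        calc t = 1 * t := (one_mul t).symm
        _ ≤ (b / t) * t := Nat.mul_le_mul_right t hq1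
      omega
    have hbt : t ≤ b := by omega
    have h2 : b - t ∈ B := hB b hbB hbt
    have hbtq : b - t = i + (b / t - 1) * t := by omega
    have hmd := mod_div_helper (b / t - 1) hi
    have h4 : b - t ∈ D := by
      rw [hD, Finset.mem_filter]
      refine ⟨h2, ?_⟩
      rw [hbtq]
      exact hmd.1
    rw [hE, Finset.mem_image]
    refine ⟨b - t, h4, ?_⟩
    show (b - t) / t = b / t - 1
    rw [hbtq]
    exact hmd.2
  have hErange : E = Finset.range E.card := predclosed_eq_range hEpred
  have hDE : D = E.image (fun m => i + m * t) := by
    ext b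
    simp only [hE, Finset.image_image, Finset.mem_image, Function.comp]
    constructor
    · intro hb
      exact ⟨b, hb, (hmem b hb).symm⟩
    · rintro ⟨c, hc, rfl⟩
      have h := hmem c hc
      rwa [← h]
  conv_lhs => rw [hDE, hErange, hcard]

section PartSide

/-- the increasing enumeration of the beta set of a decreasing `lam` -/
def bfun (r : ℕ) (lam : Fin r → ℕ) (j : Fin r) : ℕ :=
  lam ⟨r - 1 - (j : ℕ), by have := j.isLt; omega⟩ + (j : ℕ)

lemma bfun_strictMono {r : ℕ} {lam : Fin r → ℕ}
    (hdec : ∀ i j : Fin r, i ≤ j → lam j ≤ lam i) : StrictMono (bfun r lam) := by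
  intro j j' hjj
  have hjj' : (j : ℕ) < (j' : ℕ) := hjj
  have hle : lam ⟨r - 1 - (j : ℕ), by have := j.isLt; omega⟩
      ≤ lam ⟨r - 1 - (j' : ℕ), by have := j'.isLt; omega⟩ := by
    refine hdec _ _ ?_
    show r - 1 - (j' : ℕ) ≤ r - 1 - (j : ℕ)
    omega
  show lam _ + (j : ℕ) < lam _ + (j' : ℕ)
  omega

lemma betaSet_eq_image_bfun {r : ℕ} (lam : Fin r → ℕ) :
    betaSet r lam = Finset.image (bfun r lam) Finset.univ := by
  unfold betaSet bfun
  ext b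
  simp only [Finset.mem_image, Finset.mem_univ, true_and]
  constructor
  · rintro ⟨i, rfl⟩
    have hi : (i : ℕ) < r := i.isLt
    refine ⟨⟨r - 1 - (i : ℕ), by omega⟩, ?_⟩
    have hidx : (⟨r - 1 - (r - 1 - (i : ℕ)), by omega⟩ : Fin r) = i := Fin.ext (by simp; omega)
    simp only [hidx]
  · rintro ⟨j, rfl⟩
    refine ⟨⟨r - 1 - (j : ℕ), by have := j.isLt; omega⟩, ?_⟩
    have hidx : r - 1 - (r - 1 - (j : ℕ)) = (j : ℕ) := by have := j.isLt; omega
    simp [hidx]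

lemma betaSet_card_s4 {r : ℕ} {lam : Fin r → ℕ}
    (hdec : ∀ i j : Fin r, i ≤ j → lam j ≤ lam i) : (betaSet r lam).card = r := by
  rw [betaSet_eq_image_bfun lam,
    Finset.card_image_of_injective _ (bfun_strictMono hdec).injective]
  simp

lemma betaSet_inj {r : ℕ} {lam1 lam2 : Fin r → ℕ}
    (h1 : ∀ i j : Fin r, i ≤ j → lam1 j ≤ lam1 i)
    (h2 : ∀ i j : Fin r, i ≤ j → lam2 j ≤ lam2 i)
    (heq : betaSet r lam1 = betaSet r lam2) : lam1 = lam2 := by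
  have hc1 : (betaSet r lam1).card = r := betaSet_card_s4 h1
  have hf1 : bfun r lam1 = (betaSet r lam1).orderEmbOfFin hc1 :=
    Finset.orderEmbOfFin_unique hc1
      (fun x => by rw [betaSet_eq_image_bfun lam1]; exact Finset.mem_image_of_mem _ (mem_univ x))
      (bfun_strictMono h1)
  have hf2 : bfun r lam2 = (betaSet r lam1).orderEmbOfFin hc1 :=
    Finset.orderEmbOfFin_unique hc1
      (fun x => by
        rw [heq, betaSet_eq_image_bfun lam2]
        exact Finset.mem_image_of_mem _ (mem_univ x))
      (bfun_strictMono h2)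
  have hff : bfun r lam1 = bfun r lam2 := hf1.trans hf2.symm
  funext i
  have hi : (i : ℕ) < r := i.isLt
  have hthis := congrFun hff ⟨r - 1 - (i : ℕ), by omega⟩
  unfold bfun at hthis
  have hidx : (⟨r - 1 - (r - 1 - (i : ℕ)), by omega⟩ : Fin r) = i := Fin.ext (by simp; omega)
  simp only [hidx] at hthis
  omega

lemma tcore_beta_eq_justification {r t : ℕ} (ht : 0 < t) {lam : Fin r → ℕ}
    (hcore : IsTCore r t lam) : betaSet r lam = justification r t lam := by
  conv_lhs => rw [biUnion_filter_mod ht (betaSet r lam)]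
  unfold justification aCount
  refine Finset.biUnion_congr rfl ?_
  intro i hi
  exact tclosed_filter_eq ht hcore i (Finset.mem_range.mp hi)

lemma sum_aCount {r t : ℕ} (ht : 0 < t) {lam : Fin r → ℕ}
    (hdec : ∀ i j : Fin r, i ≤ j → lam j ≤ lam i) :
    ∑ i ∈ Finset.range t, aCount r t lam i = r := by
  unfold aCount
  rw [← Finset.card_eq_sum_card_fiberwise
    (f := fun b => b % t) (t := Finset.range t)
    (fun x _ => Finset.mem_range.mpr (Nat.mod_lt _ ht))]
  exact betaSet_card_s4 hdec

end PartSide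

lemma exists_lam_s4 {r s t : ℕ} (hr : 1 ≤ r) (ht : 2 ≤ t) (hlarge : r * t ≤ s)
    (a : Fin t → ℕ) (ha : ∑ i, a i = r) :
    ∃ lam : Fin r → ℕ, (IsRectPartition r s lam ∧ IsTCore r t lam) ∧
      (fun i : Fin t => aCount r t lam (i : ℕ)) = a := by
  have ht0 : 0 < t := by omega
  set B : Finset ℕ :=
    Finset.univ.biUnion (fun i : Fin t => (Finset.range (a i)).image fun m => (i : ℕ) + m * t)
    with hBdef
  have hmemB : ∀ b, b ∈ B ↔ ∃ i : Fin t, ∃ m, m < a i ∧ (i : ℕ) + m * t = b := by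
    intro b
    simp only [hBdef, Finset.mem_biUnion, Finset.mem_univ, true_and, Finset.mem_image,
      Finset.mem_range]
  have hinj : ∀ i : Fin t, Function.Injective (fun m => (i : ℕ) + m * t) := by
    intro i m1 m2 h
    simp only at h
    have h1 := (mod_div_helper m1 i.isLt).2
    have h2 := (mod_div_helper m2 i.isLt).2
    rw [h] at h1
    omega
  have hcardB : B.card = r := by
    rw [hBdef, Finset.card_biUnion]
    · rw [← ha]
      refine Finset.sum_congr rfl ?_
      intro i _
      rw [Finset.card_image_of_injective _ (hinj i), Finset.card_range]
    · intro i _ j _ hij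
      rw [Function.onFun, Finset.disjoint_left]
      rintro b hbi hbj
      simp only [Finset.mem_image, Finset.mem_range] at hbi hbj
      obtain ⟨m, _, rfl⟩ := hbi
      obtain ⟨m', _, h'⟩ := hbj
      have e1 := (mod_div_helper m i.isLt).1
      have e2 := (mod_div_helper m' j.isLt).1
      rw [h'] at e2
      exact hij (Fin.ext (by omega))
  have hboundB : ∀ b ∈ B, b < r * t := by
    intro b hb
    obtain ⟨i, m, hm, rfl⟩ := (hmemB b).mp hb
    have hai : a i ≤ r := by
      rw [← ha]
      exact Finset.single_le_sum (fun j _ => Nat.zero_le (a j)) (Finset.mem_univ i)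
    have h1 : (m + 1) * t ≤ r * t := Nat.mul_le_mul_right t (by omega)
    have h2 : (m + 1) * t = m * t + t := Nat.succ_mul m t
    have := i.isLt
    omega
  have htB : ∀ b ∈ B, t ≤ b → b - t ∈ B := by
    intro b hb hbt
    obtain ⟨i, m, hm, rfl⟩ := (hmemB b).mp hb
    have hit := i.isLt
    have hm1 : 1 ≤ m := by
      by_contra h
      have : m = 0 := by omega
      subst this
      simp at hbt
      omega
    have hsub : (m - 1) * t = m * t - t := by
      have := Nat.sub_mul m 1 t
      omega
    have hmt : t ≤ m * t := by
      calc t = 1 * t := (one_mul t).symm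
      _ ≤ m * t := Nat.mul_le_mul_right t hm1
    refine (hmemB _).mpr ⟨i, m - 1, by omega, by omega⟩
  have hr0 : 0 < r := hr
  set g := B.orderEmbOfFin hcardB with hgdef
  have hg : StrictMono g := g.strictMono
  have hge : ∀ k : Fin r, (k : ℕ) ≤ g k := strictMono_ge hr0 hg
  set idx : Fin r → Fin r := fun i => ⟨r - 1 - (i : ℕ), by have := i.isLt; omega⟩ with hidxdef
  have hidxv : ∀ i : Fin r, ((idx i : Fin r) : ℕ) = r - 1 - (i : ℕ) := fun i => rfl
  have hidxidx : ∀ j : Fin r, idx (idx j) = j := by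
    intro j
    have := j.isLt
    refine Fin.ext ?_
    rw [hidxv, hidxv]
    omega
  set lam : Fin r → ℕ := fun i => g (idx i) - (r - 1 - (i : ℕ)) with hlamdef
  have hlam_add : ∀ i : Fin r, lam i + (r - 1 - (i : ℕ)) = g (idx i) := by
    intro i
    have h1 : r - 1 - (i : ℕ) ≤ g (idx i) := by
      have := hge (idx i)
      rwa [hidxv i] at this
    show g (idx i) - (r - 1 - (i : ℕ)) + (r - 1 - (i : ℕ)) = g (idx i)
    omega
  have hbeta : betaSet r lam = B := by
    ext b
    unfold betaSet
    simp only [Finset.mem_image, Finset.mem_univ, true_and]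
    constructor
    · rintro ⟨i, rfl⟩
      rw [hlam_add i, hgdef]
      exact Finset.orderEmbOfFin_mem B hcardB _
    · intro hb
      have hrange : ∃ j : Fin r, g j = b := by
        have h := Finset.range_orderEmbOfFin B hcardB
        rw [Set.ext_iff] at h
        have := (h b).mpr (by simpa using hb)
        rw [← hgdef] at this
        exact this
      obtain ⟨j, hj⟩ := hrange
      refine ⟨idx j, ?_⟩
      rw [hlam_add (idx j), hidxidx j]
      exact hj
  have hdec : ∀ i j : Fin r, i ≤ j → lam j ≤ lam i := by
    intro i j hij
    have hij' : (i : ℕ) ≤ (j : ℕ) := hij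
    have hil := i.isLt
    have hjl := j.isLt
    have hgap := strictMono_gap hg ((r - 1 - (i : ℕ)) - (r - 1 - (j : ℕ)))
      (idx j) (idx i) (by rw [hidxv, hidxv]; omega)
    have h1 := hlam_add i
    have h2 := hlam_add j
    omega
  have hbound : ∀ i : Fin r, lam i ≤ s := by
    intro i
    have hmem : g (idx i) ∈ B := by
      rw [hgdef]
      exact Finset.orderEmbOfFin_mem B hcardB _
    have h3 := hboundB _ hmem
    have h2 := hlam_add i
    omega
  have hcore : IsTCore r t lam := by
    intro b hb hbt
    rw [hbeta] at hb ⊢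
    exact htB b hb hbt
  refine ⟨lam, ⟨⟨hdec, hbound⟩, hcore⟩, ?_⟩
  funext i
  show aCount r t lam (i : ℕ) = a i
  unfold aCount
  rw [hbeta]
  have hfilter : B.filter (fun b => b % t = (i : ℕ))
      = (Finset.range (a i)).image (fun m => (i : ℕ) + m * t) := by
    ext b
    simp only [Finset.mem_filter, Finset.mem_image, Finset.mem_range]
    constructor
    · rintro ⟨hb, hmod⟩
      obtain ⟨i', m, hm, rfl⟩ := (hmemB b).mp hb
      have e1 := (mod_div_helper m i'.isLt).1
      have : (i' : ℕ) = (i : ℕ) := by omega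
      exact ⟨m, by rw [← Fin.ext this]; exact hm, by omega⟩
    · rintro ⟨m, hm, rfl⟩
      refine ⟨(hmemB _).mpr ⟨i, m, hm, rfl⟩, (mod_div_helper m i.isLt).1⟩
  rw [hfilter, Finset.card_image_of_injective _ (hinj i), Finset.card_range]

end Aux

/-- If `s ≥ rt`, the number of `t`-cores in `Par_{r,s}` is `C(r+t−1, r)`. -/
theorem ncard_tcores_large_s (r s t : ℕ) (hr : 1 ≤ r) (hs : 1 ≤ s) (ht : 2 ≤ t)
    (hlarge : r * t ≤ s) :
    {lam : Fin r → ℕ | IsRectPartition r s lam ∧ IsTCore r t lam}.ncard =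
      (r + t - 1).choose r := by
  have ht0 : 0 < t := by omega
  set S := {lam : Fin r → ℕ | IsRectPartition r s lam ∧ IsTCore r t lam} with hS
  set F : (Fin r → ℕ) → (Fin t → ℕ) := fun lam i => aCount r t lam (i : ℕ) with hF
  have hInj : Set.InjOn F S := by
    intro l1 h1 l2 h2 hfeq
    obtain ⟨⟨hd1, _⟩, hc1⟩ := h1
    obtain ⟨⟨hd2, _⟩, hc2⟩ := h2
    have hjust : justification r t l1 = justification r t l2 := by
      unfold justification
      refine Finset.biUnion_congr rfl ?_
      intro i hi
      have hac : aCount r t l1 i = aCount r t l2 i := by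
        have h := congrFun hfeq ⟨i, Finset.mem_range.mp hi⟩
        simpa [hF] using h
      rw [hac]
    exact betaSet_inj hd1 hd2 ((tcore_beta_eq_justification ht0 hc1).trans
      (hjust.trans (tcore_beta_eq_justification ht0 hc2).symm))
  have hImg : F '' S = {a : Fin t → ℕ | ∑ i, a i = r} := by
    ext a
    constructor
    · rintro ⟨lam, hlam, rfl⟩
      obtain ⟨⟨hdec, _⟩, _⟩ := hlam
      show ∑ i : Fin t, F lam i = r
      simp only [hF]
      rw [Fin.sum_univ_eq_sum_range (fun i => aCount r t lam i) t]
      exact sum_aCount ht0 hdec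
    · intro ha
      obtain ⟨lam, hmem, hfa⟩ := exists_lam_s4 hr ht hlarge a ha
      exact ⟨lam, hmem, hfa⟩
  calc S.ncard = (F '' S).ncard := (Set.ncard_image_of_injOn hInj).symm
    _ = {a : Fin t → ℕ | ∑ i, a i = r}.ncard := by rw [hImg]
    _ = Nat.card {a : Fin t → ℕ // ∑ i, a i = r} := by
        rw [← Nat.card_coe_set_eq]
        exact Nat.card_congr (Equiv.subtypeEquivRight fun a => Iff.rfl)
    _ = (t + r - 1).choose r := cardA t r
    _ = (r + t - 1).choose r := by rw [Nat.add_comm t r]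
end
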